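/- Let X be a nonempty set, H a real Hilbert space, τ > 0, and κ : X → H a map with ‖κ(y)‖ = τ for all y ∈ X. Fix x ∈ X, a sequence of design points v : ℕ → X, and noise variances λ : ℕ → ℝ with λ(ℓ) > 0; apply the Gaussian-process posterior setup with ξ := κ(x) and φ(ℓ) := κ(v(ℓ)), producing uⁿ ∈ H. Then there exists a function k∞ : X → ℝ such that the functions y ↦ ⟨κ(y), uⁿ⟩ converge to k∞ uniformly on X as n → ∞. (This is the abstract form of the proposition that for a stationary prior covariance k⁰(x,y) = ⟨κ(x),κ(y)⟩, the posterior covariances kⁿ(x,y) = ⟨κ(y), uⁿ⟩ converge uniformly in y, irrespective of the allocation of design points.) -/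

import Mathlib

open Matrix Filter
open scoped RealInnerProductSpace

variable {H : Type*} [NormedAddCommGroup H] [InnerProductSpace ℝ H]

/-- The Gram matrix `Gₙ` with entries `⟪φ i, φ j⟫ + λ i · δᵢⱼ`. -/
noncomputable def gramMat (φ : ℕ → H) (lam : ℕ → ℝ) (n : ℕ) :
    Matrix (Fin n) (Fin n) ℝ :=
  Matrix.of fun i j : Fin n => ⟪φ i, φ j⟫ + if i = j then lam i else 0

/-- The posterior vector `uⁿ := ξ − Σ_{i<n} wⁿᵢ · φ i` where `wⁿ := Gₙ⁻¹ kₙ`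
and `kₙ = (⟪φ i, ξ⟫)_{i<n}`; in particular `u⁰ = ξ`. -/
noncomputable def postVec (ξ : H) (φ : ℕ → H) (lam : ℕ → ℝ) (n : ℕ) : H :=
  ξ - ∑ i : Fin n,
    (((gramMat φ lam n)⁻¹ *ᵥ fun i : Fin n => ⟪φ i, ξ⟫) i) • φ i

section Aux

variable (ξ : H) (φ : ℕ → H) (lam : ℕ → ℝ)

noncomputable def wvec (n : ℕ) : Fin n → ℝ :=
  (gramMat φ lam n)⁻¹ *ᵥ fun i : Fin n => ⟪φ i, ξ⟫

lemma postVec_def (n : ℕ) :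
    postVec ξ φ lam n = ξ - ∑ i : Fin n, wvec ξ φ lam n i • φ i := rfl

lemma gram_quad (n : ℕ) (c : Fin n → ℝ) :
    c ⬝ᵥ (gramMat φ lam n *ᵥ c) = ‖∑ i, c i • φ i‖ ^ 2 + ∑ i : Fin n, lam (i : ℕ) * c i ^ 2 := by
  have hnorm : ‖∑ i, c i • φ i‖ ^ 2 = ∑ i, ∑ j, c i * (c j * ⟪φ i, φ j⟫) := by
    rw [← real_inner_self_eq_norm_sq, sum_inner]
    simp_rw [inner_sum, real_inner_smul_left, real_inner_smul_right]
  rw [hnorm]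
  simp only [dotProduct, Matrix.mulVec, gramMat, Matrix.of_apply, Finset.mul_sum]
  rw [← Finset.sum_add_distrib]
  refine Finset.sum_congr rfl fun i _ => ?_
  have h : ∀ j : Fin n, c i * ((⟪φ i, φ j⟫ + if i = j then lam (i : ℕ) else 0) * c j)
      = c i * (c j * ⟪φ i, φ j⟫) + (if i = j then lam (i : ℕ) * c i ^ 2 else 0) := by
    intro j
    by_cases hij : i = j
    · subst hij; rw [if_pos rfl, if_pos rfl]; ring
    · rw [if_neg hij, if_neg hij]; ring
  rw [Finset.sum_congr rfl fun j _ => h j, Finset.sum_add_distrib, Finset.sum_ite_eq]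
  simp

lemma gram_posDef (hlam : ∀ ℓ, 0 < lam ℓ) (n : ℕ) : (gramMat φ lam n).PosDef := by
  rw [Matrix.posDef_iff_dotProduct_mulVec]
  constructor
  · ext i j
    simp only [gramMat, Matrix.conjTranspose_apply, Matrix.of_apply, star_trivial]
    rw [real_inner_comm]
    congr 1
    by_cases h : i = j
    · subst h; simp
    · simp [h, Ne.symm h]
  · intro c hc
    have key := gram_quad φ lam n c
    simp only [star_trivial]
    rw [key]
    have h1 : 0 < ∑ i : Fin n, lam (i : ℕ) * c i ^ 2 := by
      obtain ⟨i, hi⟩ := Function.ne_iff.mp hc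
      refine Finset.sum_pos' (fun j _ => mul_nonneg (hlam (j:ℕ)).le (sq_nonneg _)) ⟨i, Finset.mem_univ i, ?_⟩
      have hci : c i ≠ 0 := hi
      exact mul_pos (hlam (i:ℕ)) (pow_pos (abs_pos.mpr hci) 2 |> fun _ => by positivity)
    positivity

lemma gram_mulVec_wvec (hlam : ∀ ℓ, 0 < lam ℓ) (n : ℕ) :
    gramMat φ lam n *ᵥ wvec ξ φ lam n = fun i : Fin n => ⟪φ i, ξ⟫ := by
  have hdet : IsUnit (gramMat φ lam n).det :=
    isUnit_iff_ne_zero.mpr (gram_posDef φ lam hlam n).det_pos.ne'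
  unfold wvec
  rw [Matrix.mulVec_mulVec, Matrix.mul_nonsing_inv _ hdet, Matrix.one_mulVec]

lemma inner_phi_postVec (hlam : ∀ ℓ, 0 < lam ℓ) (n : ℕ) (i : Fin n) :
    ⟪φ i, postVec ξ φ lam n⟫ = lam i * wvec ξ φ lam n i := by
  have hG : ∑ j : Fin n, (⟪φ i, φ j⟫ + if i = j then lam i else 0) * wvec ξ φ lam n j
      = ⟪φ i, ξ⟫ := by
    have := congrFun (gram_mulVec_wvec ξ φ lam hlam n) i
    simpa [Matrix.mulVec, dotProduct, gramMat] using this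
  have hsplit : ∑ j : Fin n, (⟪φ i, φ j⟫ + if i = j then lam i else 0) * wvec ξ φ lam n j
      = (∑ j : Fin n, wvec ξ φ lam n j * ⟪φ i, φ j⟫) + lam i * wvec ξ φ lam n i := by
    have h : ∀ j : Fin n, (⟪φ i, φ j⟫ + if i = j then lam (i : ℕ) else 0) * wvec ξ φ lam n j
        = wvec ξ φ lam n j * ⟪φ i, φ j⟫ + (if i = j then lam (i : ℕ) * wvec ξ φ lam n j else 0) := by
      intro j; split <;> ring
    rw [Finset.sum_congr rfl fun j _ => h j, Finset.sum_add_distrib, Finset.sum_ite_eq]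
    simp
  rw [postVec_def, inner_sub_right, inner_sum]
  simp_rw [real_inner_smul_right]
  rw [← hG, hsplit]
  ring

/-- `wⁿ` extended by zero to `ℕ`. -/
noncomputable def Wext (n : ℕ) : ℕ → ℝ :=
  fun i => if h : i < n then wvec ξ φ lam n ⟨i, h⟩ else 0

lemma postVec_eq_range (n : ℕ) :
    postVec ξ φ lam n = ξ - ∑ i ∈ Finset.range n, Wext ξ φ lam n i • φ i := by
  rw [postVec_def]
  congr 1
  rw [← Fin.sum_univ_eq_sum_range (fun i => Wext ξ φ lam n i • φ i) n]
  refine Finset.sum_congr rfl fun i _ => ?_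
  simp [Wext, i.isLt]

lemma inner_phi_postVec' (hlam : ∀ ℓ, 0 < lam ℓ) (n : ℕ) {i : ℕ} (hi : i < n) :
    ⟪φ i, postVec ξ φ lam n⟫ = lam i * Wext ξ φ lam n i := by
  have := inner_phi_postVec ξ φ lam hlam n ⟨i, hi⟩
  simpa [Wext, hi] using this

/-- `Jₙ = ‖uⁿ‖² + Σ λᵢ (wⁿᵢ)²`, the minimum of the regularized least-squares functional. -/
noncomputable def Jn (n : ℕ) : ℝ :=
  ‖postVec ξ φ lam n‖ ^ 2 + ∑ i ∈ Finset.range n, lam i * (Wext ξ φ lam n i) ^ 2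

lemma Jn_nonneg (hlam : ∀ ℓ, 0 < lam ℓ) (n : ℕ) : 0 ≤ Jn ξ φ lam n := by
  unfold Jn
  have : 0 ≤ ∑ i ∈ Finset.range n, lam i * (Wext ξ φ lam n i) ^ 2 :=
    Finset.sum_nonneg fun i _ => mul_nonneg (hlam i).le (sq_nonneg _)
  positivity

/-- Key quadratic identity: `wᵐ` exactly minimizes the functional, with explicit
quadratic remainder. -/
lemma key_identity (hlam : ∀ ℓ, 0 < lam ℓ) (m : ℕ) (c : ℕ → ℝ) :
    ‖ξ - ∑ i ∈ Finset.range m, c i • φ i‖ ^ 2 + ∑ i ∈ Finset.range m, lam i * c i ^ 2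
      = Jn ξ φ lam m
        + (‖∑ i ∈ Finset.range m, (c i - Wext ξ φ lam m i) • φ i‖ ^ 2
           + ∑ i ∈ Finset.range m, lam i * (c i - Wext ξ φ lam m i) ^ 2) := by
  set W := Wext ξ φ lam m with hW
  set u := postVec ξ φ lam m with hu
  set s := ∑ i ∈ Finset.range m, (c i - W i) • φ i with hs
  have hξ : ξ - ∑ i ∈ Finset.range m, c i • φ i = u - s := by
    rw [hu, postVec_eq_range, hs, ← hW, sub_sub, ← Finset.sum_add_distrib, sub_right_inj]
    refine Finset.sum_congr rfl fun i _ => ?_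
    rw [← add_smul]
    congr 1
    ring
  have hsu : ⟪s, u⟫ = ∑ i ∈ Finset.range m, (c i - W i) * (lam i * W i) := by
    rw [hs, sum_inner]
    refine Finset.sum_congr rfl fun i hi => ?_
    rw [real_inner_smul_left, inner_phi_postVec' ξ φ lam hlam m (Finset.mem_range.mp hi)]
  have hnorm : ‖u - s‖ ^ 2 = ‖u‖ ^ 2 - 2 * ⟪s, u⟫ + ‖s‖ ^ 2 := by
    rw [← real_inner_self_eq_norm_sq, inner_sub_sub_self,
      real_inner_self_eq_norm_sq, real_inner_self_eq_norm_sq, real_inner_comm]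
    ring
  have hlamsum : ∑ i ∈ Finset.range m, lam i * c i ^ 2
      = (∑ i ∈ Finset.range m, lam i * W i ^ 2)
        + 2 * (∑ i ∈ Finset.range m, (c i - W i) * (lam i * W i))
        + ∑ i ∈ Finset.range m, lam i * (c i - W i) ^ 2 := by
    rw [Finset.mul_sum, ← Finset.sum_add_distrib, ← Finset.sum_add_distrib]
    refine Finset.sum_congr rfl fun i _ => ?_
    ring
  rw [hξ, hnorm, hsu, hlamsum, Jn]
  ring

lemma Wext_sum_smul_eq {n m : ℕ} (hnm : n ≤ m) :
    ∑ i ∈ Finset.range m, Wext ξ φ lam n i • φ i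
      = ∑ i ∈ Finset.range n, Wext ξ φ lam n i • φ i := by
  refine (Finset.sum_subset (Finset.range_subset_range.mpr hnm) fun i _ hi => ?_).symm
  have : ¬ i < n := fun h => hi (Finset.mem_range.mpr h)
  simp [Wext, this]

lemma Wext_sum_sq_eq {n m : ℕ} (hnm : n ≤ m) :
    ∑ i ∈ Finset.range m, lam i * (Wext ξ φ lam n i) ^ 2
      = ∑ i ∈ Finset.range n, lam i * (Wext ξ φ lam n i) ^ 2 := by
  refine (Finset.sum_subset (Finset.range_subset_range.mpr hnm) fun i _ hi => ?_).symm
  have : ¬ i < n := fun h => hi (Finset.mem_range.mpr h)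
  simp [Wext, this]

/-- The main estimate: `Jₙ = Jₘ + ‖uᵐ − uⁿ‖² + (nonneg)` for `n ≤ m`. -/
lemma Jn_decomp (hlam : ∀ ℓ, 0 < lam ℓ) {n m : ℕ} (hnm : n ≤ m) :
    Jn ξ φ lam n = Jn ξ φ lam m
      + (‖postVec ξ φ lam m - postVec ξ φ lam n‖ ^ 2
         + ∑ i ∈ Finset.range m, lam i * (Wext ξ φ lam n i - Wext ξ φ lam m i) ^ 2) := by
  have hkey := key_identity ξ φ lam hlam m (Wext ξ φ lam n)
  have h1 : ξ - ∑ i ∈ Finset.range m, Wext ξ φ lam n i • φ i = postVec ξ φ lam n := by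
    rw [Wext_sum_smul_eq ξ φ lam hnm, ← postVec_eq_range]
  have h2 : postVec ξ φ lam m - postVec ξ φ lam n
      = ∑ i ∈ Finset.range m, (Wext ξ φ lam n i - Wext ξ φ lam m i) • φ i := by
    rw [postVec_eq_range ξ φ lam m, ← h1, sub_sub_sub_cancel_left, ← Finset.sum_sub_distrib]
    refine Finset.sum_congr rfl fun i _ => ?_
    rw [← sub_smul]
  rw [h1, Wext_sum_sq_eq ξ φ lam hnm, ← Jn] at hkey
  rw [h2]
  exact hkey

lemma Jn_antitone (hlam : ∀ ℓ, 0 < lam ℓ) : Antitone (Jn ξ φ lam) := by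
  intro n m hnm
  have := Jn_decomp ξ φ lam hlam hnm
  have hpos : 0 ≤ ‖postVec ξ φ lam m - postVec ξ φ lam n‖ ^ 2
      + ∑ i ∈ Finset.range m, lam i * (Wext ξ φ lam n i - Wext ξ φ lam m i) ^ 2 := by
    have : 0 ≤ ∑ i ∈ Finset.range m, lam i * (Wext ξ φ lam n i - Wext ξ φ lam m i) ^ 2 :=
      Finset.sum_nonneg fun i _ => mul_nonneg (hlam i).le (sq_nonneg _)
    positivity
  linarith

lemma norm_postVec_sub_sq_le (hlam : ∀ ℓ, 0 < lam ℓ) {n m : ℕ} (hnm : n ≤ m) :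
    ‖postVec ξ φ lam m - postVec ξ φ lam n‖ ^ 2 ≤ Jn ξ φ lam n - Jn ξ φ lam m := by
  have := Jn_decomp ξ φ lam hlam hnm
  have hpos : 0 ≤ ∑ i ∈ Finset.range m, lam i * (Wext ξ φ lam n i - Wext ξ φ lam m i) ^ 2 :=
    Finset.sum_nonneg fun i _ => mul_nonneg (hlam i).le (sq_nonneg _)
  linarith

end Aux

/-- Uniform convergence of the posterior covariances: for a stationary feature
map `κ` (constant norm `τ`), the functions `y ↦ ⟪κ y, uⁿ⟫` converge uniformly
on `X`, irrespective of the allocation of design points `v`. -/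
theorem posterior_cov_tendstoUniformly {X : Type*} [Nonempty X]
    [CompleteSpace H] (τ : ℝ) (hτ : 0 < τ) (κ : X → H) (hκ : ∀ y, ‖κ y‖ = τ)
    (x : X) (v : ℕ → X) (lam : ℕ → ℝ) (hlam : ∀ ℓ, 0 < lam ℓ) :
    ∃ kinf : X → ℝ,
      TendstoUniformly
        (fun n y => ⟪κ y, postVec (κ x) (fun ℓ => κ (v ℓ)) lam n⟫) kinf atTop := by
  set ξ := κ x
  set φ : ℕ → H := fun ℓ => κ (v ℓ)
  set u : ℕ → H := postVec ξ φ lam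
  set J : ℕ → ℝ := Jn ξ φ lam
  -- J converges to its infimum L
  have hanti : Antitone J := Jn_antitone ξ φ lam hlam
  have hbdd : BddBelow (Set.range J) :=
    ⟨0, by rintro _ ⟨n, rfl⟩; exact Jn_nonneg ξ φ lam hlam n⟩
  set L := ⨅ n, J n with hL
  have hJL : Tendsto J atTop (nhds L) := tendsto_atTop_ciInf hanti hbdd
  have hLle : ∀ n, L ≤ J n := fun n => ciInf_le hbdd n
  -- u is Cauchy
  have hcauchy : CauchySeq u := by
    refine cauchySeq_of_le_tendsto_0' (fun n => Real.sqrt (J n - L)) ?_ ?_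
    · intro n m hnm
      rw [dist_eq_norm, norm_sub_rev]
      rw [Real.le_sqrt (norm_nonneg _) (by linarith [hLle n])]
      have h1 := norm_postVec_sub_sq_le ξ φ lam hlam hnm
      have h2 := hLle m
      linarith
    · have : Tendsto (fun n => J n - L) atTop (nhds 0) := by
        simpa using hJL.sub (tendsto_const_nhds (x := L))
      simpa [Real.sqrt_zero] using this.sqrt
  obtain ⟨uinf, huinf⟩ := cauchySeq_tendsto_of_complete hcauchy
  refine ⟨fun y => ⟪κ y, uinf⟫, ?_⟩
  rw [Metric.tendstoUniformly_iff]
  intro ε hε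
  have hnorm0 : Tendsto (fun n => ‖u n - uinf‖) atTop (nhds 0) :=
    tendsto_iff_norm_sub_tendsto_zero.mp huinf
  have hev : ∀ᶠ n in atTop, ‖u n - uinf‖ < ε / τ := by
    have := hnorm0.eventually (eventually_lt_nhds (by positivity : (0:ℝ) < ε / τ)) 
    simpa using this
  filter_upwards [hev] with n hn y
  rw [Real.dist_eq]
  have h1 : ⟪κ y, uinf⟫ - ⟪κ y, u n⟫ = ⟪κ y, uinf - u n⟫ := (inner_sub_right _ _ _).symm
  rw [h1]
  calc |⟪κ y, uinf - u n⟫| ≤ ‖κ y‖ * ‖uinf - u n‖ := abs_real_inner_le_norm _ _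
    _ = τ * ‖u n - uinf‖ := by rw [hκ y, norm_sub_rev]
    _ < τ * (ε / τ) := by
        apply mul_lt_mul_of_pos_left hn hτ
    _ = ε := by field_simp
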